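/- Suppose m₀ : [0,1] → [0,∞) is nondecreasing with ∫₀¹ m₀(v) dv = 1, that γ_r ≥ γ, x_ε ≥ E(X), G(I_{0 x_ε}) ≤ 0, and that the condition K₀′(0) · ∫_{x_ε}^∞ (1 − F(x)) dx ≤ ∫₀^{x_ε} K₀(F(x)) dx holds, where K₀′(0) denotes the right derivative of K₀ at 0. Then C_CVaR(I_{ab}) ≤ γ_r for every truncated stop loss contract I_{ab} with 0 ≤ a ≤ b and CVaR(R_{I_{ab}}) > 0. -/

import Mathlib

open MeasureTheory Set Filter

noncomputable section

/-- Truncated stop loss contract `I_{ab}` with cut-off points `a ≤ b`. -/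
def Iab (a b x : ℝ) : ℝ := min (max (x - a) 0) (b - a)

/-- Admissible reinsurance function: `0 ≤ I x ≤ x` together with the
incentive compatible (slope) condition. -/
def Admissible (I : ℝ → ℝ) : Prop :=
  (∀ x, 0 ≤ x → 0 ≤ I x ∧ I x ≤ x) ∧
    ∀ x₁ x₂, 0 ≤ x₁ → x₁ ≤ x₂ → 0 ≤ I x₂ - I x₁ ∧ I x₂ - I x₁ ≤ x₂ - x₁

/-- Pricing kernel `K(u) = ∫_u^1 (m v - 1) dv`. -/
def Ker (m : ℝ → ℝ) (u : ℝ) : ℝ := ∫ v in u..1, (m v - 1)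

/-- Insurer's expected profit `G(I) = γ E(X) - ∫_0^∞ K(F x) I'(x) dx`. -/
def Profit (γ EX : ℝ) (K F I : ℝ → ℝ) : ℝ :=
  γ * EX - ∫ x in Ioi (0:ℝ), K (F x) * deriv I x

/-- Value at Risk of the retained risk `R_I(X) = X - I(X)` at level `ε`,
given the `(1-ε)`-quantile `xε`. -/
def VaRRet (I : ℝ → ℝ) (xε : ℝ) : ℝ := xε - I xε

/-- Conditional Value at Risk of the retained risk:
`E(X | X ≥ xε) - I(xε) - (1/ε) ∫_{xε}^∞ (1 - F x) I'(x) dx`, where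
`E(X | X ≥ xε) = xε + (1/ε) ∫_{xε}^∞ (1 - F x) dx`. -/
def CVaRRet (F I : ℝ → ℝ) (ε xε : ℝ) : ℝ :=
  (xε + ε⁻¹ * ∫ x in Ioi xε, (1 - F x)) - I xε
    - ε⁻¹ * ∫ x in Ioi xε, (1 - F x) * deriv I x

/-- Full pricing kernel `K(u) = (1+γr) K₀(u) + γr (1-u)` built from a
normalized kernel `K₀`. -/
def KFull (K₀ : ℝ → ℝ) (γr u : ℝ) : ℝ := (1 + γr) * K₀ u + γr * (1 - u)

end

/-- The derivative of the truncated stop loss contract is the indicator of `(a,b)`,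
away from the two kink points. -/
lemma deriv_Iab_eq {a b : ℝ} (hab : a ≤ b) {x : ℝ} (hxa : x ≠ a) (hxb : x ≠ b) :
    deriv (Iab a b) x = Set.indicator (Ioo a b) (fun _ => (1:ℝ)) x := by
  rcases lt_trichotomy x a with h | h | h
  · have he : Iab a b =ᶠ[nhds x] fun _ => (0:ℝ) := by
      filter_upwards [Iio_mem_nhds h] with y hy
      have hy' : y < a := hy
      unfold Iab
      rw [max_eq_right (by linarith : y - a ≤ 0), min_eq_left (by linarith : (0:ℝ) ≤ b - a)]
    rw [he.deriv_eq, deriv_const]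
    rw [Set.indicator_of_notMem (fun hm => absurd hm.1 (by linarith))]
  · exact absurd h hxa
  · rcases lt_trichotomy x b with hb | hb | hb
    · have he : Iab a b =ᶠ[nhds x] fun y => y - a := by
        filter_upwards [Ioo_mem_nhds h hb] with y hy
        unfold Iab
        rw [max_eq_left (by linarith [hy.1] : (0:ℝ) ≤ y - a),
          min_eq_left (by linarith [hy.2] : y - a ≤ b - a)]
      rw [he.deriv_eq]
      have hd : HasDerivAt (fun y : ℝ => y - a) 1 x := (hasDerivAt_id' x).sub_const a
      rw [hd.deriv]
      have hmem : x ∈ Ioo a b := ⟨h, hb⟩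
      rw [Set.indicator_of_mem hmem]
    · exact absurd hb hxb
    · have he : Iab a b =ᶠ[nhds x] fun _ => b - a := by
        filter_upwards [Ioi_mem_nhds hb] with y hy
        have hy' : b < y := hy
        unfold Iab
        rw [max_eq_left (by linarith : (0:ℝ) ≤ y - a), min_eq_right (by linarith : b - a ≤ y - a)]
      rw [he.deriv_eq, deriv_const]
      rw [Set.indicator_of_notMem (fun hm => absurd hm.2 (by linarith))]

/-- The normalized kernel is nonnegative on `[0,1]`. -/
lemma Ker_nonneg {m : ℝ → ℝ} (hnn : ∀ v ∈ Icc (0:ℝ) 1, 0 ≤ m v)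
    (hint : IntervalIntegrable m volume 0 1) (hmono : MonotoneOn m (Icc 0 1))
    (hnorm : (∫ v in (0:ℝ)..1, m v) = 1) {u : ℝ} (hu : u ∈ Icc (0:ℝ) 1) :
    0 ≤ Ker m u := by
  obtain ⟨hu0, hu1⟩ := hu
  have hsub1 : uIcc 0 u ⊆ uIcc (0:ℝ) 1 := by
    rw [uIcc_of_le hu0, uIcc_of_le (zero_le_one)]
    exact Icc_subset_Icc le_rfl hu1
  have hsub2 : uIcc u 1 ⊆ uIcc (0:ℝ) 1 := by
    rw [uIcc_of_le hu1, uIcc_of_le (zero_le_one)]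
    exact Icc_subset_Icc hu0 le_rfl
  have hi1 : IntervalIntegrable m volume 0 u := hint.mono_set hsub1
  have hi2 : IntervalIntegrable m volume u 1 := hint.mono_set hsub2
  have hadj : (∫ v in (0:ℝ)..u, m v) + ∫ v in u..1, m v = 1 := by
    rw [intervalIntegral.integral_add_adjacent_intervals hi1 hi2, hnorm]
  have hmu : 0 ≤ m u := hnn u ⟨hu0, hu1⟩
  have h1 : (∫ v in (0:ℝ)..u, m v) ≤ u * m u := by
    calc (∫ v in (0:ℝ)..u, m v) ≤ ∫ _ in (0:ℝ)..u, m u := by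
          apply intervalIntegral.integral_mono_on hu0 hi1 intervalIntegrable_const
          intro v hv
          exact hmono ⟨hv.1, le_trans hv.2 hu1⟩ ⟨hu0, hu1⟩ hv.2
      _ = u * m u := by simp
  have h2 : (1 - u) * m u ≤ ∫ v in u..1, m v := by
    calc (1 - u) * m u = ∫ _ in u..1, m u := by simp [mul_comm]
      _ ≤ ∫ v in u..1, m v := by
          apply intervalIntegral.integral_mono_on hu1 intervalIntegrable_const hi2
          intro v hv
          exact hmono ⟨hu0, hu1⟩ ⟨le_trans hu0 hv.1, hv.2⟩ hv.1
  have key : (∫ v in (0:ℝ)..u, m v) ≤ u := by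
    nlinarith [mul_le_mul_of_nonneg_left h1 (by linarith : (0:ℝ) ≤ 1 - u),
      mul_le_mul_of_nonneg_left h2 hu0]
  have hker : Ker m u = (∫ v in u..1, m v) - (1 - u) := by
    unfold Ker
    rw [intervalIntegral.integral_sub hi2 intervalIntegrable_const]
    simp
  linarith

/-- The normalized kernel is continuous on `[0,1]`. -/
lemma Ker_contOn {m : ℝ → ℝ} (hint : IntervalIntegrable m volume 0 1) :
    ContinuousOn (Ker m) (Icc 0 1) := by
  have hint' : IntegrableOn (fun v => m v - 1) (uIcc (0:ℝ) 1) volume := by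
    rw [uIcc_of_le zero_le_one]
    rw [← intervalIntegrable_iff_integrableOn_Icc_of_le zero_le_one]
    exact hint.sub intervalIntegrable_const
  have := intervalIntegral.continuousOn_primitive_interval_left hint'
  rwa [uIcc_of_le (zero_le_one : (0:ℝ) ≤ 1)] at this

/-- Lemma 1 (CVaR): under the normalized monotone market factor model with
`γ_r ≥ γ`, `xε ≥ E(X)`, `G(I_{0 xε}) ≤ 0` and condition (e33), the
CVaR-ratio of every truncated stop loss contract is at most `γ_r`. -/
theorem truncated_stop_loss_ratio_le_CVaR
    (F m₀ : ℝ → ℝ) (γ γr ε xε d0 : ℝ)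
    (hγ : 0 < γ) (hε : ε ∈ Ioo (0:ℝ) 1)
    (hF0 : F 0 = 0) (hFc : Continuous F) (hFm : StrictMonoOn F (Ici 0))
    (hFlim : Tendsto F atTop (nhds 1))
    (hEXint : IntegrableOn (fun x => 1 - F x) (Ioi 0))
    (hxε : 0 ≤ xε) (hq : F xε = 1 - ε)
    (hm₀nn : ∀ v ∈ Icc (0:ℝ) 1, 0 ≤ m₀ v)
    (hm₀int : IntervalIntegrable m₀ volume 0 1)
    (hm₀mono : MonotoneOn m₀ (Icc 0 1))
    (hm₀norm : (∫ v in (0:ℝ)..1, m₀ v) = 1)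
    (hγr : γ ≤ γr)
    (hxεEX : (∫ x in Ioi (0:ℝ), (1 - F x)) ≤ xε)
    (hG0 : Profit γ (∫ x in Ioi (0:ℝ), (1 - F x)) (KFull (Ker m₀) γr) F (Iab 0 xε) ≤ 0)
    (hd0 : HasDerivWithinAt (Ker m₀) d0 (Ici 0) 0)
    (hcond : d0 * (∫ x in Ioi xε, (1 - F x)) ≤ ∫ x in (0:ℝ)..xε, Ker m₀ (F x))
 :
    ∀ a b : ℝ, 0 ≤ a → a ≤ b → 0 < CVaRRet F (Iab a b) ε xε →
      Profit γ (∫ x in Ioi (0:ℝ), (1 - F x)) (KFull (Ker m₀) γr) F (Iab a b) / CVaRRet F (Iab a b) ε xε ≤ γr := by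
  obtain ⟨hε0, hε1⟩ := hε
  intro a b ha hab hC
  have hγr0 : 0 ≤ γr := le_trans hγ.le hγr
  have hFmono : MonotoneOn F (Ici 0) := hFm.monotoneOn
  have hFnn : ∀ x : ℝ, 0 ≤ x → 0 ≤ F x := by
    intro x hx
    have := hFmono (Set.mem_Ici.mpr le_rfl) hx hx
    rwa [hF0] at this
  have hFle : ∀ x : ℝ, 0 ≤ x → F x ≤ 1 := by
    intro x hx
    refine ge_of_tendsto hFlim ?_
    filter_upwards [eventually_ge_atTop x] with y hy
    exact hFmono hx (le_trans hx hy) hy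
  have hKlb : ∀ x : ℝ, 0 ≤ x → γr * (1 - F x) ≤ KFull (Ker m₀) γr (F x) := by
    intro x hx
    have h0 : 0 ≤ Ker m₀ (F x) :=
      Ker_nonneg hm₀nn hm₀int hm₀mono hm₀norm ⟨hFnn x hx, hFle x hx⟩
    unfold KFull
    nlinarith
  have hKnn : ∀ x : ℝ, 0 ≤ x → 0 ≤ KFull (Ker m₀) γr (F x) := by
    intro x hx
    have h1 := hKlb x hx
    have h2 := hFle x hx
    nlinarith
  have hinv1 : (1:ℝ) ≤ ε⁻¹ := by
    have h := mul_inv_cancel₀ (ne_of_gt hε0)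
    have hip : 0 < ε⁻¹ := inv_pos.mpr hε0
    nlinarith
  -- the two relevant pieces of (a,b)
  set L : Set ℝ := Ioo a b ∩ Iio xε with hLdef
  set R : Set ℝ := Ioo a b ∩ Ioi xε with hRdef
  have hLmeas : MeasurableSet L := measurableSet_Ioo.inter measurableSet_Iio
  have hRmeas : MeasurableSet R := measurableSet_Ioo.inter measurableSet_Ioi
  have hLsub : L ⊆ Ioi (0:ℝ) := fun x hx => lt_of_le_of_lt ha hx.1.1
  have hRsub : R ⊆ Ioi (0:ℝ) := fun x hx => lt_of_le_of_lt ha hx.1.1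
  -- almost everywhere identification of the derivative
  have hane : ∀ᵐ x : ℝ, x ≠ a := by
    rw [ae_iff]
    simp only [ne_eq, not_not, setOf_eq_eq_singleton]
    exact measure_singleton a
  have hbne : ∀ᵐ x : ℝ, x ≠ b := by
    rw [ae_iff]
    simp only [ne_eq, not_not, setOf_eq_eq_singleton]
    exact measure_singleton b
  have hderiv : ∀ᵐ x : ℝ, deriv (Iab a b) x = Set.indicator (Ioo a b) (fun _ => (1:ℝ)) x := by
    filter_upwards [hane, hbne] with x h1 h2
    exact deriv_Iab_eq hab h1 h2
  -- rewriting the profit integral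
  have hP : (∫ x in Ioi (0:ℝ), KFull (Ker m₀) γr (F x) * deriv (Iab a b) x)
      = ∫ x in Ioi (0:ℝ), Set.indicator (Ioo a b) (fun x => KFull (Ker m₀) γr (F x)) x := by
    refine integral_congr_ae ?_
    filter_upwards [ae_restrict_of_ae hderiv] with x hx
    rw [hx, Set.indicator_apply, Set.indicator_apply]
    by_cases hm : x ∈ Ioo a b <;> simp [hm]
  -- rewriting the CVaR integral
  have hQ : (∫ x in Ioi xε, (1 - F x) * deriv (Iab a b) x)
      = ∫ x in Ioi (0:ℝ), Set.indicator R (fun x => (1 - F x)) x := by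
    have e1 : (∫ x in Ioi xε, (1 - F x) * deriv (Iab a b) x)
        = ∫ x in Ioi xε, Set.indicator (Ioo a b) (fun x => (1 - F x)) x := by
      refine integral_congr_ae ?_
      filter_upwards [ae_restrict_of_ae hderiv] with x hx
      rw [hx, Set.indicator_apply, Set.indicator_apply]
      by_cases hm : x ∈ Ioo a b <;> simp [hm]
    rw [e1, integral_indicator measurableSet_Ioo, integral_indicator hRmeas,
      Measure.restrict_restrict measurableSet_Ioo, Measure.restrict_restrict hRmeas,
      inter_eq_left.mpr hRsub, hRdef]
  -- rewriting the tail expectation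
  have hT : (∫ x in Ioi xε, (1 - F x))
      = ∫ x in Ioi (0:ℝ), Set.indicator (Ioi xε) (fun x => (1 - F x)) x := by
    rw [integral_indicator measurableSet_Ioi, Measure.restrict_restrict measurableSet_Ioi,
      inter_eq_left.mpr (Ioi_subset_Ioi hxε)]
  -- rewriting the quantile
  have hxe : xε = ∫ x in Ioi (0:ℝ), Set.indicator (Ioc 0 xε) (fun _ => (1:ℝ)) x := by
    rw [integral_indicator measurableSet_Ioc, Measure.restrict_restrict measurableSet_Ioc,
      inter_eq_left.mpr Ioc_subset_Ioi_self, setIntegral_const, smul_eq_mul, mul_one,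
      Real.volume_real_Ioc_of_le hxε]
    ring
  -- rewriting the retained quantile payment
  have hIe : Iab a b xε = ∫ x in Ioi (0:ℝ), Set.indicator L (fun _ => (1:ℝ)) x := by
    rw [integral_indicator hLmeas, Measure.restrict_restrict hLmeas,
      inter_eq_left.mpr hLsub, setIntegral_const, smul_eq_mul, mul_one]
    have hL' : L = Ioo a (min b xε) := by
      rw [hLdef]
      ext y
      simp only [mem_inter_iff, mem_Ioo, mem_Iio, lt_min_iff]
      tauto
    rw [hL', Real.volume_real_Ioo]
    rcases le_total a (min b xε) with h | h
    · rw [max_eq_left (by linarith : (0:ℝ) ≤ min b xε - a)]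
      unfold Iab
      rcases le_total b xε with h' | h'
      · rw [min_eq_left h'] at h ⊢
        rw [max_eq_left (by linarith : (0:ℝ) ≤ xε - a),
          min_eq_right (by linarith : b - a ≤ xε - a)]
      · rw [min_eq_right h'] at h ⊢
        rw [max_eq_left (by linarith : (0:ℝ) ≤ xε - a),
          min_eq_left (by linarith : xε - a ≤ b - a)]
    · rw [max_eq_right (by linarith : min b xε - a ≤ 0)]
      unfold Iab
      rcases min_le_iff.mp h with h' | h'
      · have hba : b - a = 0 := by linarith
        rw [hba]
        exact min_eq_right (le_max_right _ _)
      · rw [max_eq_right (by linarith : xε - a ≤ 0)]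
        exact min_eq_left (by linarith : (0:ℝ) ≤ b - a)
  -- integrability of the pieces
  have hInt1 : Integrable (fun x => 1 - F x) (volume.restrict (Ioi (0:ℝ))) := hEXint
  have hIL : Integrable (Set.indicator L (fun _ => (1:ℝ))) (volume.restrict (Ioi (0:ℝ))) := by
    rw [integrable_indicator_iff hLmeas]
    refine integrableOn_const (ne_of_lt ?_)
    calc (volume.restrict (Ioi (0:ℝ))) L ≤ volume L := Measure.restrict_apply_le _ _
      _ ≤ volume (Ioo a b) := measure_mono inter_subset_left
      _ < ⊤ := by rw [Real.volume_Ioo]; exact ENNReal.ofReal_lt_top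
  have hIIoc : Integrable (Set.indicator (Ioc (0:ℝ) xε) (fun _ => (1:ℝ)))
      (volume.restrict (Ioi (0:ℝ))) := by
    rw [integrable_indicator_iff measurableSet_Ioc]
    refine integrableOn_const (ne_of_lt ?_)
    calc (volume.restrict (Ioi (0:ℝ))) (Ioc 0 xε) ≤ volume (Ioc 0 xε) :=
          Measure.restrict_apply_le _ _
      _ < ⊤ := by rw [Real.volume_Ioc]; exact ENNReal.ofReal_lt_top
  have hIR : Integrable (Set.indicator R (fun x => (1 - F x)))
      (volume.restrict (Ioi (0:ℝ))) := by
    rw [integrable_indicator_iff hRmeas]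
    show Integrable _ ((volume.restrict (Ioi (0:ℝ))).restrict R)
    rw [Measure.restrict_restrict hRmeas]
    exact hEXint.mono_set inter_subset_right
  have hIT : Integrable (Set.indicator (Ioi xε) (fun x => (1 - F x)))
      (volume.restrict (Ioi (0:ℝ))) := by
    rw [integrable_indicator_iff measurableSet_Ioi]
    show Integrable _ ((volume.restrict (Ioi (0:ℝ))).restrict (Ioi xε))
    rw [Measure.restrict_restrict measurableSet_Ioi]
    exact hEXint.mono_set inter_subset_right
  have hIK : Integrable (Set.indicator (Ioo a b) (fun x => KFull (Ker m₀) γr (F x)))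
      (volume.restrict (Ioi (0:ℝ))) := by
    rw [integrable_indicator_iff measurableSet_Ioo]
    show Integrable _ ((volume.restrict (Ioi (0:ℝ))).restrict (Ioo a b))
    rw [Measure.restrict_restrict measurableSet_Ioo]
    have hK0c : ContinuousOn (Ker m₀) (Icc 0 1) := Ker_contOn hm₀int
    have hKc : ContinuousOn (fun u => KFull (Ker m₀) γr u) (Icc 0 1) := by
      unfold KFull
      exact (continuousOn_const.mul hK0c).add
        (continuousOn_const.mul (continuousOn_const.sub continuousOn_id))
    have hmap : MapsTo F (Icc a b) (Icc 0 1) := fun x hx =>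
      ⟨hFnn x (le_trans ha hx.1), hFle x (le_trans ha hx.1)⟩
    have hcont : ContinuousOn (fun x => KFull (Ker m₀) γr (F x)) (Icc a b) :=
      hKc.comp hFc.continuousOn hmap
    exact (hcont.integrableOn_compact isCompact_Icc).mono_set
      (subset_trans inter_subset_left Ioo_subset_Icc_self)
  -- the master pointwise comparison, integrated over (0,∞)
  have hmaster :
      (∫ x in Ioi (0:ℝ), (γ * (1 - F x) + γr * Set.indicator L (fun _ => (1:ℝ)) x
          + γr * ε⁻¹ * Set.indicator R (fun x => (1 - F x)) x))
      ≤ ∫ x in Ioi (0:ℝ), (γr * Set.indicator (Ioc 0 xε) (fun _ => (1:ℝ)) x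
          + γr * ε⁻¹ * Set.indicator (Ioi xε) (fun x => (1 - F x)) x
          + Set.indicator (Ioo a b) (fun x => KFull (Ker m₀) γr (F x)) x) := by
    refine setIntegral_mono_on
      (((hInt1.const_mul γ).add (hIL.const_mul γr)).add (hIR.const_mul (γr * ε⁻¹)))
      (((hIIoc.const_mul γr).add (hIT.const_mul (γr * ε⁻¹))).add hIK)
      measurableSet_Ioi ?_
    intro x hx
    have hx0 : (0:ℝ) < x := hx
    have hfl : 0 ≤ F x := hFnn x hx0.le
    have hfu : F x ≤ 1 := hFle x hx0.le
    have h1F : 0 ≤ 1 - F x := by linarith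
    have hKl := hKlb x hx0.le
    have hKn := hKnn x hx0.le
    have hγγr : γ * (1 - F x) ≤ γr * (1 - F x) := mul_le_mul_of_nonneg_right hγr h1F
    have hγ1 : γ * (1 - F x) ≤ γ := by nlinarith
    by_cases hm : x ∈ Ioo a b
    · rcases lt_or_ge xε x with h2 | h2
      · have eL : Set.indicator L (fun _ => (1:ℝ)) x = 0 :=
          Set.indicator_of_notMem (fun hc => absurd hc.2 (by simp only [mem_Iio]; linarith)) _
        have hmR : x ∈ R := ⟨hm, h2⟩
        have eR : Set.indicator R (fun x => (1 - F x)) x = 1 - F x :=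
          Set.indicator_of_mem hmR _
        have eI : Set.indicator (Ioc (0:ℝ) xε) (fun _ => (1:ℝ)) x = 0 :=
          Set.indicator_of_notMem (fun hc => absurd hc.2 (by linarith)) _
        have eT : Set.indicator (Ioi xε) (fun x => (1 - F x)) x = 1 - F x :=
          Set.indicator_of_mem h2 _
        have eK : Set.indicator (Ioo a b) (fun x => KFull (Ker m₀) γr (F x)) x
            = KFull (Ker m₀) γr (F x) := Set.indicator_of_mem hm _
        rw [eL, eR, eI, eT, eK]
        linarith
      · have eR : Set.indicator R (fun x => (1 - F x)) x = 0 :=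
          Set.indicator_of_notMem (fun hc => absurd hc.2 (by simp only [mem_Ioi]; linarith)) _
        have hmI : x ∈ Ioc (0:ℝ) xε := ⟨hx0, h2⟩
        have eI : Set.indicator (Ioc (0:ℝ) xε) (fun _ => (1:ℝ)) x = 1 :=
          Set.indicator_of_mem hmI _
        have eT : Set.indicator (Ioi xε) (fun x => (1 - F x)) x = 0 :=
          Set.indicator_of_notMem (by simp only [mem_Ioi]; linarith) _
        have eK : Set.indicator (Ioo a b) (fun x => KFull (Ker m₀) γr (F x)) x
            = KFull (Ker m₀) γr (F x) := Set.indicator_of_mem hm _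
        rw [eR, eI, eT, eK]
        by_cases hL : x < xε
        · have hmL : x ∈ L := ⟨hm, hL⟩
          have eL : Set.indicator L (fun _ => (1:ℝ)) x = 1 :=
            Set.indicator_of_mem hmL _
          rw [eL]
          linarith
        · have eL : Set.indicator L (fun _ => (1:ℝ)) x = 0 :=
            Set.indicator_of_notMem (fun hc => absurd hc.2 hL) _
          rw [eL]
          linarith
    · have eL : Set.indicator L (fun _ => (1:ℝ)) x = 0 :=
        Set.indicator_of_notMem (fun hc => absurd hc.1 hm) _
      have eR : Set.indicator R (fun x => (1 - F x)) x = 0 :=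
        Set.indicator_of_notMem (fun hc => absurd hc.1 hm) _
      have eK : Set.indicator (Ioo a b) (fun x => KFull (Ker m₀) γr (F x)) x = 0 :=
        Set.indicator_of_notMem hm _
      rw [eL, eR, eK]
      rcases lt_or_ge xε x with h2 | h2
      · have eI : Set.indicator (Ioc (0:ℝ) xε) (fun _ => (1:ℝ)) x = 0 :=
          Set.indicator_of_notMem (fun hc => absurd hc.2 (by linarith)) _
        have eT : Set.indicator (Ioi xε) (fun x => (1 - F x)) x = 1 - F x :=
          Set.indicator_of_mem h2 _
        rw [eI, eT]
        have h3 : γr * (1 - F x) ≤ γr * ε⁻¹ * (1 - F x) := by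
          nlinarith [mul_nonneg (mul_nonneg hγr0 h1F) (by linarith : (0:ℝ) ≤ ε⁻¹ - 1)]
        linarith
      · have hmI : x ∈ Ioc (0:ℝ) xε := ⟨hx0, h2⟩
        have eI : Set.indicator (Ioc (0:ℝ) xε) (fun _ => (1:ℝ)) x = 1 :=
          Set.indicator_of_mem hmI _
        have eT : Set.indicator (Ioi xε) (fun x => (1 - F x)) x = 0 :=
          Set.indicator_of_notMem (by simp only [mem_Ioi]; linarith) _
        rw [eI, eT]
        linarith
  -- expand the integrals of the sums
  have e_lhs : (∫ x in Ioi (0:ℝ), (γ * (1 - F x) + γr * Set.indicator L (fun _ => (1:ℝ)) x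
          + γr * ε⁻¹ * Set.indicator R (fun x => (1 - F x)) x))
      = γ * (∫ x in Ioi (0:ℝ), (1 - F x))
        + γr * (∫ x in Ioi (0:ℝ), Set.indicator L (fun _ => (1:ℝ)) x)
        + γr * ε⁻¹ * (∫ x in Ioi (0:ℝ), Set.indicator R (fun x => (1 - F x)) x) := by
    have i1 : Integrable (fun x => γ * (1 - F x) + γr * Set.indicator L (fun _ => (1:ℝ)) x)
        (volume.restrict (Ioi (0:ℝ))) := (hInt1.const_mul γ).add (hIL.const_mul γr)
    rw [integral_add i1 (hIR.const_mul (γr * ε⁻¹)),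
      integral_add (hInt1.const_mul γ) (hIL.const_mul γr),
      integral_const_mul, integral_const_mul, integral_const_mul]
  have e_rhs : (∫ x in Ioi (0:ℝ), (γr * Set.indicator (Ioc 0 xε) (fun _ => (1:ℝ)) x
          + γr * ε⁻¹ * Set.indicator (Ioi xε) (fun x => (1 - F x)) x
          + Set.indicator (Ioo a b) (fun x => KFull (Ker m₀) γr (F x)) x))
      = γr * (∫ x in Ioi (0:ℝ), Set.indicator (Ioc 0 xε) (fun _ => (1:ℝ)) x)
        + γr * ε⁻¹ * (∫ x in Ioi (0:ℝ), Set.indicator (Ioi xε) (fun x => (1 - F x)) x)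
        + (∫ x in Ioi (0:ℝ), Set.indicator (Ioo a b) (fun x => KFull (Ker m₀) γr (F x)) x) := by
    have i1 : Integrable (fun x => γr * Set.indicator (Ioc (0:ℝ) xε) (fun _ => (1:ℝ)) x
          + γr * ε⁻¹ * Set.indicator (Ioi xε) (fun x => (1 - F x)) x)
        (volume.restrict (Ioi (0:ℝ))) := (hIIoc.const_mul γr).add (hIT.const_mul (γr * ε⁻¹))
    rw [integral_add i1 hIK,
      integral_add (hIIoc.const_mul γr) (hIT.const_mul (γr * ε⁻¹)),
      integral_const_mul, integral_const_mul]
  rw [e_lhs, e_rhs] at hmaster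
  rw [← hIe, ← hxe, ← hT] at hmaster
  -- conclude
  rw [div_le_iff₀ hC]
  have expand : γr * CVaRRet F (Iab a b) ε xε
      = γr * xε + γr * ε⁻¹ * (∫ x in Ioi xε, (1 - F x)) - γr * Iab a b xε
        - γr * ε⁻¹ * (∫ x in Ioi xε, (1 - F x) * deriv (Iab a b) x) := by
    unfold CVaRRet
    ring
  rw [expand]
  unfold Profit
  rw [hP, hQ]
  linarith
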